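/- Let μ be a probability measure with finite moments, Jacobi parameters (β_n, γ_n), and free cumulants r_n. Then r_4 = γ_0[(β_1 − β_0)² + (γ_1 − γ_0)]. -/

import Mathlib

open scoped Classical
open MeasureTheory Finset

noncomputable section

/-- `V` is nested inside `U`: some interval with endpoints in `U` contains all of `V`. -/
def Nests {m : ℕ} (U V : Finset (Fin m)) : Prop :=
  ∃ r ∈ U, ∃ s ∈ U, ∀ k ∈ V, r ≤ k ∧ k ≤ s

/-- A finpartition of `{1,...,m}` is noncrossing. -/
def IsNoncrossing {m : ℕ} (π : Finpartition (Finset.univ : Finset (Fin m))) : Prop :=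
  ∀ V₁ ∈ π.parts, ∀ V₂ ∈ π.parts, ∀ x₁ x₂ x₃ x₄ : Fin m,
    x₁ < x₂ → x₂ < x₃ → x₃ < x₄ →
    x₁ ∈ V₁ → x₃ ∈ V₁ → x₂ ∈ V₂ → x₄ ∈ V₂ → V₁ = V₂

/-- The depth of a block: the number of other blocks nesting it. -/
def depth {m : ℕ} (π : Finpartition (Finset.univ : Finset (Fin m)))
    (V : Finset (Fin m)) : ℕ :=
  (π.parts.filter (fun U => U ≠ V ∧ Nests U V)).card

/-- Noncrossing partitions of `{1,...,m}`. -/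
def NCset (m : ℕ) : Finset (Finpartition (Finset.univ : Finset (Fin m))) :=
  Finset.univ.filter IsNoncrossing

/-- Noncrossing partitions with all blocks of size at most 2. -/
def NC12 (m : ℕ) : Finset (Finpartition (Finset.univ : Finset (Fin m))) :=
  Finset.univ.filter (fun π => IsNoncrossing π ∧ ∀ V ∈ π.parts, V.card ≤ 2)

/-- Interval partitions of `{1,...,m}`. -/
def IntPart (m : ℕ) : Finset (Finpartition (Finset.univ : Finset (Fin m))) :=
  Finset.univ.filter
    (fun π => ∀ V ∈ π.parts, ∀ x ∈ V, ∀ y ∈ V, ∀ z : Fin m, x ≤ z → z ≤ y → z ∈ V)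

/-- The `m`-th moment of a measure on `ℝ`. -/
def mom (μ : Measure ℝ) (m : ℕ) : ℝ := ∫ x, x ^ m ∂μ

/-- `μ` has all moments finite. -/
def FiniteMoments (μ : Measure ℝ) : Prop :=
  ∀ m : ℕ, Integrable (fun x => x ^ m) μ

/-- `(β, γ)` are Jacobi parameters for `μ`: there are monic orthogonal polynomials
satisfying the three-term recurrence. -/
def HasJacobi (μ : Measure ℝ) (β γ : ℕ → ℝ) : Prop :=
  ∃ P : ℕ → Polynomial ℝ,
    (∀ n, (P n).Monic) ∧ (∀ n, (P n).natDegree = n) ∧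
    (∀ i j, i ≠ j → ∫ x, (P i).eval x * (P j).eval x ∂μ = 0) ∧
    (Polynomial.X * P 0 = P 1 + Polynomial.C (β 0) * P 0) ∧
    (∀ n, Polynomial.X * P (n + 1) =
      P (n + 2) + Polynomial.C (β (n + 1)) * P (n + 1) + Polynomial.C (γ n) * P n)

/-- `r` is the sequence of free cumulants of `μ` (moment-cumulant formula over
noncrossing partitions). -/
def FreeCumulants (μ : Measure ℝ) (r : ℕ → ℝ) : Prop :=
  ∀ m : ℕ, 1 ≤ m → mom μ m = ∑ π ∈ NCset m, ∏ V ∈ π.parts, r V.card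

/-- `η` is the sequence of Boolean cumulants of `μ`. -/
def BooleanCumulants (μ : Measure ℝ) (η : ℕ → ℝ) : Prop :=
  ∀ m : ℕ, 1 ≤ m → mom μ m = ∑ π ∈ IntPart m, ∏ V ∈ π.parts, η V.card

/-- `R` is the sequence of two-state free cumulants of the pair `(μ̃, μ)`,
where `r` are the free cumulants of `μ`. -/
def TwoStateCumulants (μt μ : Measure ℝ) (R r : ℕ → ℝ) : Prop :=
  FreeCumulants μ r ∧
  ∀ m : ℕ, 1 ≤ m → mom μt m =
    ∑ π ∈ NCset m,
      (∏ V ∈ π.parts.filter (fun V => depth π V = 0), R V.card) *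
      (∏ V ∈ π.parts.filter (fun V => depth π V ≠ 0), r V.card)


/-! ### Auxiliary combinatorics -/

instance decNC {m : ℕ} (π : Finpartition (Finset.univ : Finset (Fin m))) :
    Decidable (IsNoncrossing π) :=
  decidable_of_iff (∀ V₁ ∈ π.parts, ∀ V₂ ∈ π.parts, ∀ x₁ x₂ x₃ x₄ : Fin m,
    x₁ < x₂ → x₂ < x₃ → x₃ < x₄ →
    x₁ ∈ V₁ → x₃ ∈ V₁ → x₂ ∈ V₂ → x₄ ∈ V₂ → V₁ = V₂) Iff.rfl

def mkFP (m : ℕ) (ps : Finset (Finset (Fin m))) (h1 : ps.SupIndep id)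
    (h2 : ps.sup id = Finset.univ) (h3 : ⊥ ∉ ps) :
    Finpartition (Finset.univ : Finset (Fin m)) := ⟨ps, h1, h2, h3⟩

@[simp] lemma mkFP_parts (m : ℕ) (ps h1 h2 h3) : (mkFP m ps h1 h2 h3).parts = ps := rfl

lemma parts_eq_image {m : ℕ} (π : Finpartition (Finset.univ : Finset (Fin m))) :
    π.parts = Finset.univ.image π.part := by
  ext t
  constructor
  · intro ht
    obtain ⟨x, hx⟩ := π.nonempty_of_mem_parts ht
    exact Finset.mem_image.2 ⟨x, Finset.mem_univ x, π.part_eq_of_mem ht hx⟩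
  · intro ht
    obtain ⟨x, -, rfl⟩ := Finset.mem_image.1 ht
    exact π.part_mem.2 (Finset.mem_univ x)

section keys
set_option maxRecDepth 10000
set_option synthInstance.maxSize 1000
set_option synthInstance.maxHeartbeats 2000000
set_option maxHeartbeats 4000000

lemma key1 : ∀ A : Finset (Fin 1), 0 ∈ A →
    ({A} : Finset (Finset (Fin 1))) ∈
      ({ {{0}} } : Finset (Finset (Finset (Fin 1)))) := by decide

lemma key2 : ∀ A : Finset (Fin 2), 0 ∈ A → ∀ B : Finset (Fin 2), 1 ∈ B →
    (1 ∈ A ↔ B = A) → (0 ∈ B ↔ A = B) →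
    ({A, B} : Finset (Finset (Fin 2))) ∈
      ({ {{0,1}}, {{0},{1}} } : Finset (Finset (Finset (Fin 2)))) := by decide

lemma key3 : ∀ A : Finset (Fin 3), 0 ∈ A → ∀ B : Finset (Fin 3), 1 ∈ B →
    (1 ∈ A ↔ B = A) → (0 ∈ B ↔ A = B) →
    ∀ C : Finset (Fin 3), 2 ∈ C →
    (2 ∈ A ↔ C = A) → (0 ∈ C ↔ A = C) → (2 ∈ B ↔ C = B) → (1 ∈ C ↔ B = C) →
    ({A, B, C} : Finset (Finset (Fin 3))) ∈
      ({ {{0,1,2}}, {{0,1},{2}}, {{0,2},{1}}, {{1,2},{0}}, {{0},{1},{2}} } :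
        Finset (Finset (Finset (Fin 3)))) := by decide

lemma key4 : ∀ A : Finset (Fin 4), 0 ∈ A → ∀ B : Finset (Fin 4), 1 ∈ B →
    (1 ∈ A ↔ B = A) → (0 ∈ B ↔ A = B) →
    ∀ C : Finset (Fin 4), 2 ∈ C →
    (2 ∈ A ↔ C = A) → (0 ∈ C ↔ A = C) → (2 ∈ B ↔ C = B) → (1 ∈ C ↔ B = C) →
    ∀ D : Finset (Fin 4), 3 ∈ D →
    (3 ∈ A ↔ D = A) → (0 ∈ D ↔ A = D) → (3 ∈ B ↔ D = B) → (1 ∈ D ↔ B = D) →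
    (3 ∈ C ↔ D = C) → (2 ∈ D ↔ C = D) →
    ({A, B, C, D} : Finset (Finset (Fin 4))) ∈
      ({ {{0,1,2,3}},
         {{0,1,2},{3}}, {{0,1,3},{2}}, {{0,2,3},{1}}, {{1,2,3},{0}},
         {{0,1},{2,3}}, {{0,2},{1,3}}, {{0,3},{1,2}},
         {{0,1},{2},{3}}, {{0,2},{1},{3}}, {{0,3},{1},{2}},
         {{1,2},{0},{3}}, {{1,3},{0},{2}}, {{2,3},{0},{1}},
         {{0},{1},{2},{3}} } : Finset (Finset (Finset (Fin 4)))) := by decide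

end keys

lemma classify1 (π : Finpartition (Finset.univ : Finset (Fin 1))) :
    π.parts ∈ ({ {{0}} } : Finset (Finset (Finset (Fin 1)))) := by
  have himg : π.parts = {π.part 0} := by
    rw [parts_eq_image]
    show Finset.image π.part {0} = _
    simp
  rw [himg]
  exact key1 (π.part 0) (π.mem_part (by simp))

lemma classify2 (π : Finpartition (Finset.univ : Finset (Fin 2))) :
    π.parts ∈ ({ {{0,1}}, {{0},{1}} } : Finset (Finset (Finset (Fin 2)))) := by
  have himg : π.parts = {π.part 0, π.part 1} := by
    rw [parts_eq_image]
    show Finset.image π.part {0, 1} = _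
    simp [Finset.image_insert]
  rw [himg]
  exact key2 (π.part 0) (π.mem_part (by simp)) (π.part 1) (π.mem_part (by simp))
    (π.mem_part_iff_part_eq_part (by simp) (by simp))
    (π.mem_part_iff_part_eq_part (by simp) (by simp))

lemma classify3 (π : Finpartition (Finset.univ : Finset (Fin 3))) :
    π.parts ∈ ({ {{0,1,2}}, {{0,1},{2}}, {{0,2},{1}}, {{1,2},{0}}, {{0},{1},{2}} } :
      Finset (Finset (Finset (Fin 3)))) := by
  have himg : π.parts = {π.part 0, π.part 1, π.part 2} := by
    rw [parts_eq_image]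
    show Finset.image π.part {0, 1, 2} = _
    simp [Finset.image_insert]
  rw [himg]
  exact key3 (π.part 0) (π.mem_part (by simp)) (π.part 1) (π.mem_part (by simp))
    (π.mem_part_iff_part_eq_part (by simp) (by simp))
    (π.mem_part_iff_part_eq_part (by simp) (by simp))
    (π.part 2) (π.mem_part (by simp))
    (π.mem_part_iff_part_eq_part (by simp) (by simp))
    (π.mem_part_iff_part_eq_part (by simp) (by simp))
    (π.mem_part_iff_part_eq_part (by simp) (by simp))
    (π.mem_part_iff_part_eq_part (by simp) (by simp))

lemma classify4 (π : Finpartition (Finset.univ : Finset (Fin 4))) :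
    π.parts ∈
      ({ {{0,1,2,3}},
         {{0,1,2},{3}}, {{0,1,3},{2}}, {{0,2,3},{1}}, {{1,2,3},{0}},
         {{0,1},{2,3}}, {{0,2},{1,3}}, {{0,3},{1,2}},
         {{0,1},{2},{3}}, {{0,2},{1},{3}}, {{0,3},{1},{2}},
         {{1,2},{0},{3}}, {{1,3},{0},{2}}, {{2,3},{0},{1}},
         {{0},{1},{2},{3}} } : Finset (Finset (Finset (Fin 4)))) := by
  have himg : π.parts = {π.part 0, π.part 1, π.part 2, π.part 3} := by
    rw [parts_eq_image]
    show Finset.image π.part {0, 1, 2, 3} = _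
    simp [Finset.image_insert]
  rw [himg]
  exact key4 (π.part 0) (π.mem_part (by simp)) (π.part 1) (π.mem_part (by simp))
    (π.mem_part_iff_part_eq_part (by simp) (by simp))
    (π.mem_part_iff_part_eq_part (by simp) (by simp))
    (π.part 2) (π.mem_part (by simp))
    (π.mem_part_iff_part_eq_part (by simp) (by simp))
    (π.mem_part_iff_part_eq_part (by simp) (by simp))
    (π.mem_part_iff_part_eq_part (by simp) (by simp))
    (π.mem_part_iff_part_eq_part (by simp) (by simp))
    (π.part 3) (π.mem_part (by simp))
    (π.mem_part_iff_part_eq_part (by simp) (by simp))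
    (π.mem_part_iff_part_eq_part (by simp) (by simp))
    (π.mem_part_iff_part_eq_part (by simp) (by simp))
    (π.mem_part_iff_part_eq_part (by simp) (by simp))
    (π.mem_part_iff_part_eq_part (by simp) (by simp))
    (π.mem_part_iff_part_eq_part (by simp) (by simp))

def p11 : Finpartition (Finset.univ : Finset (Fin 1)) := mkFP 1 {{0}} (by decide) (by decide) (by decide)
def p21 : Finpartition (Finset.univ : Finset (Fin 2)) := mkFP 2 {{0,1}} (by decide) (by decide) (by decide)
def p22 : Finpartition (Finset.univ : Finset (Fin 2)) := mkFP 2 {{0},{1}} (by decide) (by decide) (by decide)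
def p31 : Finpartition (Finset.univ : Finset (Fin 3)) := mkFP 3 {{0,1,2}} (by decide) (by decide) (by decide)
def p32 : Finpartition (Finset.univ : Finset (Fin 3)) := mkFP 3 {{0,1},{2}} (by decide) (by decide) (by decide)
def p33 : Finpartition (Finset.univ : Finset (Fin 3)) := mkFP 3 {{0,2},{1}} (by decide) (by decide) (by decide)
def p34 : Finpartition (Finset.univ : Finset (Fin 3)) := mkFP 3 {{1,2},{0}} (by decide) (by decide) (by decide)
def p35 : Finpartition (Finset.univ : Finset (Fin 3)) := mkFP 3 {{0},{1},{2}} (by decide) (by decide) (by decide)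
def q1 : Finpartition (Finset.univ : Finset (Fin 4)) := mkFP 4 {{0,1,2,3}} (by decide) (by decide) (by decide)
def q2 : Finpartition (Finset.univ : Finset (Fin 4)) := mkFP 4 {{0,1,2},{3}} (by decide) (by decide) (by decide)
def q3 : Finpartition (Finset.univ : Finset (Fin 4)) := mkFP 4 {{0,1,3},{2}} (by decide) (by decide) (by decide)
def q4 : Finpartition (Finset.univ : Finset (Fin 4)) := mkFP 4 {{0,2,3},{1}} (by decide) (by decide) (by decide)
def q5 : Finpartition (Finset.univ : Finset (Fin 4)) := mkFP 4 {{1,2,3},{0}} (by decide) (by decide) (by decide)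
def q6 : Finpartition (Finset.univ : Finset (Fin 4)) := mkFP 4 {{0,1},{2,3}} (by decide) (by decide) (by decide)
def q7 : Finpartition (Finset.univ : Finset (Fin 4)) := mkFP 4 {{0,3},{1,2}} (by decide) (by decide) (by decide)
def q8 : Finpartition (Finset.univ : Finset (Fin 4)) := mkFP 4 {{0,1},{2},{3}} (by decide) (by decide) (by decide)
def q9 : Finpartition (Finset.univ : Finset (Fin 4)) := mkFP 4 {{0,2},{1},{3}} (by decide) (by decide) (by decide)
def q10 : Finpartition (Finset.univ : Finset (Fin 4)) := mkFP 4 {{0,3},{1},{2}} (by decide) (by decide) (by decide)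
def q11 : Finpartition (Finset.univ : Finset (Fin 4)) := mkFP 4 {{1,2},{0},{3}} (by decide) (by decide) (by decide)
def q12 : Finpartition (Finset.univ : Finset (Fin 4)) := mkFP 4 {{1,3},{0},{2}} (by decide) (by decide) (by decide)
def q13 : Finpartition (Finset.univ : Finset (Fin 4)) := mkFP 4 {{2,3},{0},{1}} (by decide) (by decide) (by decide)
def q14 : Finpartition (Finset.univ : Finset (Fin 4)) := mkFP 4 {{0},{1},{2},{3}} (by decide) (by decide) (by decide)

lemma NCset1_eq : NCset 1 = {p11} := by
  ext π
  simp only [NCset, Finset.mem_filter, Finset.mem_univ, true_and]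
  constructor
  · intro _
    have h := classify1 π
    simp only [Finset.mem_singleton] at h ⊢
    exact Finpartition.ext h
  · intro h
    simp only [Finset.mem_singleton] at h
    subst h; decide

lemma NCset2_eq : NCset 2 = {p21, p22} := by
  ext π
  simp only [NCset, Finset.mem_filter, Finset.mem_univ, true_and]
  constructor
  · intro _
    have h := classify2 π
    simp only [Finset.mem_insert, Finset.mem_singleton] at h ⊢
    rcases h with h|h
    · exact Or.inl (Finpartition.ext h)
    · exact Or.inr (Finpartition.ext h)
  · intro h
    simp only [Finset.mem_insert, Finset.mem_singleton] at h
    rcases h with rfl|rfl <;> decide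

lemma NCset3_eq : NCset 3 = {p31, p32, p33, p34, p35} := by
  ext π
  simp only [NCset, Finset.mem_filter, Finset.mem_univ, true_and]
  constructor
  · intro _
    have h := classify3 π
    simp only [Finset.mem_insert, Finset.mem_singleton] at h ⊢
    rcases h with h|h|h|h|h
    · exact Or.inl (Finpartition.ext h)
    · exact Or.inr (Or.inl (Finpartition.ext h))
    · exact Or.inr (Or.inr (Or.inl (Finpartition.ext h)))
    · exact Or.inr (Or.inr (Or.inr (Or.inl (Finpartition.ext h))))
    · exact Or.inr (Or.inr (Or.inr (Or.inr (Finpartition.ext h))))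
  · intro h
    simp only [Finset.mem_insert, Finset.mem_singleton] at h
    rcases h with rfl|rfl|rfl|rfl|rfl <;> decide

lemma NCset4_eq : NCset 4 =
    {q1, q2, q3, q4, q5, q6, q7, q8, q9, q10, q11, q12, q13, q14} := by
  ext π
  simp only [NCset, Finset.mem_filter, Finset.mem_univ, true_and]
  constructor
  · intro h
    have h15 := classify4 π
    simp only [Finset.mem_insert, Finset.mem_singleton] at h15 ⊢
    rcases h15 with hp|hp|hp|hp|hp|hp|hp|hp|hp|hp|hp|hp|hp|hp|hp
    · exact Or.inl (Finpartition.ext hp)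
    · exact Or.inr (Or.inl (Finpartition.ext hp))
    · exact Or.inr (Or.inr (Or.inl (Finpartition.ext hp)))
    · exact Or.inr (Or.inr (Or.inr (Or.inl (Finpartition.ext hp))))
    · exact Or.inr (Or.inr (Or.inr (Or.inr (Or.inl (Finpartition.ext hp)))))
    · exact Or.inr (Or.inr (Or.inr (Or.inr (Or.inr (Or.inl (Finpartition.ext hp))))))
    · exfalso
      unfold IsNoncrossing at h
      rw [hp] at h
      revert h
      decide
    · exact Or.inr (Or.inr (Or.inr (Or.inr (Or.inr (Or.inr (Or.inl (Finpartition.ext hp)))))))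
    · exact Or.inr (Or.inr (Or.inr (Or.inr (Or.inr (Or.inr (Or.inr (Or.inl (Finpartition.ext hp))))))))
    · exact Or.inr (Or.inr (Or.inr (Or.inr (Or.inr (Or.inr (Or.inr (Or.inr (Or.inl (Finpartition.ext hp)))))))))
    · exact Or.inr (Or.inr (Or.inr (Or.inr (Or.inr (Or.inr (Or.inr (Or.inr (Or.inr (Or.inl (Finpartition.ext hp))))))))))
    · exact Or.inr (Or.inr (Or.inr (Or.inr (Or.inr (Or.inr (Or.inr (Or.inr (Or.inr (Or.inr (Or.inl (Finpartition.ext hp)))))))))))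
    · exact Or.inr (Or.inr (Or.inr (Or.inr (Or.inr (Or.inr (Or.inr (Or.inr (Or.inr (Or.inr (Or.inr (Or.inl (Finpartition.ext hp))))))))))))
    · exact Or.inr (Or.inr (Or.inr (Or.inr (Or.inr (Or.inr (Or.inr (Or.inr (Or.inr (Or.inr (Or.inr (Or.inr (Or.inl (Finpartition.ext hp)))))))))))))
    · exact Or.inr (Or.inr (Or.inr (Or.inr (Or.inr (Or.inr (Or.inr (Or.inr (Or.inr (Or.inr (Or.inr (Or.inr (Or.inr (Finpartition.ext hp)))))))))))))
  · intro h
    simp only [Finset.mem_insert, Finset.mem_singleton] at h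
    rcases h with rfl|rfl|rfl|rfl|rfl|rfl|rfl|rfl|rfl|rfl|rfl|rfl|rfl|rfl <;> decide

lemma sum1 (r : ℕ → ℝ) : ∑ π ∈ NCset 1, ∏ V ∈ π.parts, r V.card = r 1 := by
  rw [NCset1_eq, Finset.sum_singleton]
  simp only [p11, mkFP_parts]
  rw [Finset.prod_singleton, show (({0} : Finset (Fin 1)).card) = 1 by rfl]

lemma sum2 (r : ℕ → ℝ) : ∑ π ∈ NCset 2, ∏ V ∈ π.parts, r V.card
    = r 2 + r 1 * r 1 := by
  rw [NCset2_eq, Finset.sum_insert (by decide), Finset.sum_singleton]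
  simp only [p21, p22, mkFP_parts]
  rw [Finset.prod_singleton, Finset.prod_insert (by decide), Finset.prod_singleton,
    show (({0,1} : Finset (Fin 2)).card) = 2 by rfl,
    show (({0} : Finset (Fin 2)).card) = 1 by rfl,
    show (({1} : Finset (Fin 2)).card) = 1 by rfl]

lemma sum3 (r : ℕ → ℝ) : ∑ π ∈ NCset 3, ∏ V ∈ π.parts, r V.card
    = r 3 + 3 * (r 2 * r 1) + r 1 * r 1 * r 1 := by
  rw [NCset3_eq, Finset.sum_insert (by decide), Finset.sum_insert (by decide),
    Finset.sum_insert (by decide), Finset.sum_insert (by decide), Finset.sum_singleton]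
  simp only [p31, p32, p33, p34, p35, mkFP_parts]
  rw [Finset.prod_singleton]
  rw [Finset.prod_insert (by decide), Finset.prod_singleton]
  rw [Finset.prod_insert (by decide), Finset.prod_singleton]
  rw [Finset.prod_insert (by decide), Finset.prod_singleton]
  rw [Finset.prod_insert (by decide), Finset.prod_insert (by decide), Finset.prod_singleton]
  rw [show (({0,1,2} : Finset (Fin 3)).card) = 3 by rfl,
    show (({0,1} : Finset (Fin 3)).card) = 2 by rfl,
    show (({0,2} : Finset (Fin 3)).card) = 2 by rfl,
    show (({1,2} : Finset (Fin 3)).card) = 2 by rfl,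
    show (({0} : Finset (Fin 3)).card) = 1 by rfl,
    show (({1} : Finset (Fin 3)).card) = 1 by rfl,
    show (({2} : Finset (Fin 3)).card) = 1 by rfl]
  ring

lemma sum4 (r : ℕ → ℝ) : ∑ π ∈ NCset 4, ∏ V ∈ π.parts, r V.card =
    r 4 + 4*(r 3 * r 1) + 2*(r 2 * r 2) + 6*(r 2 * r 1 * r 1) + r 1 * r 1 * r 1 * r 1 := by
  rw [NCset4_eq]
  rw [Finset.sum_insert (by decide), Finset.sum_insert (by decide), Finset.sum_insert (by decide),
    Finset.sum_insert (by decide), Finset.sum_insert (by decide), Finset.sum_insert (by decide),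
    Finset.sum_insert (by decide), Finset.sum_insert (by decide), Finset.sum_insert (by decide),
    Finset.sum_insert (by decide), Finset.sum_insert (by decide), Finset.sum_insert (by decide),
    Finset.sum_insert (by decide), Finset.sum_singleton]
  simp only [q1,q2,q3,q4,q5,q6,q7,q8,q9,q10,q11,q12,q13,q14, mkFP_parts]
  rw [Finset.prod_singleton]
  rw [Finset.prod_insert (by decide), Finset.prod_singleton]
  rw [Finset.prod_insert (by decide), Finset.prod_singleton]
  rw [Finset.prod_insert (by decide), Finset.prod_singleton]
  rw [Finset.prod_insert (by decide), Finset.prod_singleton]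
  rw [Finset.prod_insert (by decide), Finset.prod_singleton]
  rw [Finset.prod_insert (by decide), Finset.prod_singleton]
  rw [Finset.prod_insert (by decide), Finset.prod_insert (by decide), Finset.prod_singleton]
  rw [Finset.prod_insert (by decide), Finset.prod_insert (by decide), Finset.prod_singleton]
  rw [Finset.prod_insert (by decide), Finset.prod_insert (by decide), Finset.prod_singleton]
  rw [Finset.prod_insert (by decide), Finset.prod_insert (by decide), Finset.prod_singleton]
  rw [Finset.prod_insert (by decide), Finset.prod_insert (by decide), Finset.prod_singleton]
  rw [Finset.prod_insert (by decide), Finset.prod_insert (by decide), Finset.prod_singleton]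
  rw [Finset.prod_insert (by decide), Finset.prod_insert (by decide), Finset.prod_insert (by decide), Finset.prod_singleton]
  rw [show (({0,1,2,3} : Finset (Fin 4)).card) = 4 by rfl,
      show (({0,1,2} : Finset (Fin 4)).card) = 3 by rfl,
      show (({0,1,3} : Finset (Fin 4)).card) = 3 by rfl,
      show (({0,2,3} : Finset (Fin 4)).card) = 3 by rfl,
      show (({1,2,3} : Finset (Fin 4)).card) = 3 by rfl,
      show (({0,1} : Finset (Fin 4)).card) = 2 by rfl,
      show (({2,3} : Finset (Fin 4)).card) = 2 by rfl,
      show (({0,3} : Finset (Fin 4)).card) = 2 by rfl,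
      show (({1,2} : Finset (Fin 4)).card) = 2 by rfl,
      show (({0,2} : Finset (Fin 4)).card) = 2 by rfl,
      show (({1,3} : Finset (Fin 4)).card) = 2 by rfl,
      show (({0} : Finset (Fin 4)).card) = 1 by rfl,
      show (({1} : Finset (Fin 4)).card) = 1 by rfl,
      show (({2} : Finset (Fin 4)).card) = 1 by rfl,
      show (({3} : Finset (Fin 4)).card) = 1 by rfl]
  ring

/-! ### Auxiliary analysis -/

lemma intpoly (μ : Measure ℝ) [IsProbabilityMeasure μ] (hfin : FiniteMoments μ)
    (a0 a1 a2 a3 a4 : ℝ) :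
    ∫ x, (a4 * x ^ 4 + a3 * x ^ 3 + a2 * x ^ 2 + a1 * x ^ 1 + a0) ∂μ
      = a4 * mom μ 4 + a3 * mom μ 3 + a2 * mom μ 2 + a1 * mom μ 1 + a0 := by
  set c : ℕ → ℝ := fun i =>
    if i = 4 then a4 else if i = 3 then a3 else if i = 2 then a2 else if i = 1 then a1 else a0
    with hc
  have hfun : (fun x : ℝ => a4 * x ^ 4 + a3 * x ^ 3 + a2 * x ^ 2 + a1 * x ^ 1 + a0)
      = fun x => ∑ i ∈ Finset.range 5, c i * x ^ i := by
    funext x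
    simp only [Finset.sum_range_succ, Finset.sum_range_one, hc]
    norm_num
    ring
  rw [hfun, integral_finset_sum _ (fun i _ => (hfin i).const_mul (c i))]
  have hterm : ∀ i : ℕ, ∫ x, c i * x ^ i ∂μ = c i * mom μ i := fun i => by
    rw [mom]; exact integral_const_mul _ _
  simp only [hterm]
  have m0 : mom μ 0 = 1 := by simp [mom]
  rw [Finset.sum_range_succ, Finset.sum_range_succ, Finset.sum_range_succ, Finset.sum_range_succ,
    Finset.sum_range_one, m0]
  simp only [hc]
  norm_num
  ring

lemma integral_eq_comb (μ : Measure ℝ) [IsProbabilityMeasure μ] (hfin : FiniteMoments μ)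
    {f : ℝ → ℝ} {z : ℝ} (a0 a1 a2 a3 a4 : ℝ)
    (hf : ∀ x, f x = a4 * x ^ 4 + a3 * x ^ 3 + a2 * x ^ 2 + a1 * x ^ 1 + a0)
    (hz : ∫ x, f x ∂μ = z) :
    z = a4 * mom μ 4 + a3 * mom μ 3 + a2 * mom μ 2 + a1 * mom μ 1 + a0 := by
  rw [← hz, show f = fun x => a4 * x ^ 4 + a3 * x ^ 3 + a2 * x ^ 2 + a1 * x ^ 1 + a0
    from funext hf]
  exact intpoly μ hfin a0 a1 a2 a3 a4

theorem stmt_3 (μ : Measure ℝ) [IsProbabilityMeasure μ] (hfin : FiniteMoments μ)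
    (β γ : ℕ → ℝ) (hJ : HasJacobi μ β γ) (r : ℕ → ℝ) (hr : FreeCumulants μ r) :
    r 4 = γ 0 * ((β 1 - β 0) ^ 2 + (γ 1 - γ 0)) := by
  obtain ⟨P, hmon, hdeg, horth, hrec0, hrec⟩ := hJ
  have hP0 : P 0 = 1 := (hmon 0).natDegree_eq_zero.mp (hdeg 0)
  have hP1 : P 1 = Polynomial.X - Polynomial.C (β 0) := by
    rw [hP0] at hrec0; linear_combination -hrec0
  have hP2 : P 2 = Polynomial.X * P 1 - Polynomial.C (β 1) * P 1 - Polynomial.C (γ 0) := by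
    have h := hrec 0
    rw [hP0] at h
    norm_num at h
    linear_combination -h
  have hP3 : P 3 = Polynomial.X * P 2 - Polynomial.C (β 2) * P 2 - Polynomial.C (γ 1) * P 1 := by
    have h := hrec 1
    norm_num at h
    linear_combination -h
  have e1 : ∀ x : ℝ, (P 1).eval x = x - β 0 := by
    intro x; rw [hP1]; simp
  have e2 : ∀ x : ℝ, (P 2).eval x = (x - β 1) * (x - β 0) - γ 0 := by
    intro x
    rw [hP2]
    simp only [Polynomial.eval_sub, Polynomial.eval_mul, Polynomial.eval_X, Polynomial.eval_C, e1]
    ring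
  have e3 : ∀ x : ℝ, (P 3).eval x
      = x * ((x - β 1) * (x - β 0) - γ 0) - β 2 * ((x - β 1) * (x - β 0) - γ 0)
        - γ 1 * (x - β 0) := by
    intro x
    rw [hP3]
    simp only [Polynomial.eval_sub, Polynomial.eval_mul, Polynomial.eval_X, Polynomial.eval_C,
      e1, e2]
  -- the moment relations
  have eqA : (0 : ℝ) = 0 * mom μ 4 + 0 * mom μ 3 + 0 * mom μ 2 + 1 * mom μ 1 + (-β 0) :=
    integral_eq_comb μ hfin (f := fun x => Polynomial.eval x (P 0) * Polynomial.eval x (P 1))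
      (-β 0) 1 0 0 0
      (fun x => by show Polynomial.eval x (P 0) * Polynomial.eval x (P 1) = _; rw [hP0, e1]; simp only [Polynomial.eval_one]; ring)
      (horth 0 1 (by norm_num))
  have eqB : (0 : ℝ) = 0 * mom μ 4 + 0 * mom μ 3 + 1 * mom μ 2 + (-(β 0 + β 1)) * mom μ 1
      + (β 0 * β 1 - γ 0) :=
    integral_eq_comb μ hfin (f := fun x => Polynomial.eval x (P 0) * Polynomial.eval x (P 2))
      (β 0 * β 1 - γ 0) (-(β 0 + β 1)) 1 0 0
      (fun x => by show Polynomial.eval x (P 0) * Polynomial.eval x (P 2) = _; rw [hP0, e2]; simp only [Polynomial.eval_one]; ring)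
      (horth 0 2 (by norm_num))
  have eqC : (0 : ℝ) = 0 * mom μ 4 + 1 * mom μ 3 + (-(2 * β 0 + β 1)) * mom μ 2
      + (β 0 ^ 2 + 2 * β 0 * β 1 - γ 0) * mom μ 1 + (β 0 * γ 0 - β 0 ^ 2 * β 1) :=
    integral_eq_comb μ hfin (f := fun x => Polynomial.eval x (P 1) * Polynomial.eval x (P 2))
      (β 0 * γ 0 - β 0 ^ 2 * β 1) (β 0 ^ 2 + 2 * β 0 * β 1 - γ 0) (-(2 * β 0 + β 1)) 1 0
      (fun x => by show Polynomial.eval x (P 1) * Polynomial.eval x (P 2) = _; rw [e1, e2]; ring)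
      (horth 1 2 (by norm_num))
  have eqD : (0 : ℝ) = 1 * mom μ 4 + (-(2 * β 0 + β 1) - β 2) * mom μ 3
      + (β 0 ^ 2 + 2 * β 0 * β 1 - γ 0 + β 2 * (2 * β 0 + β 1) - γ 1) * mom μ 2
      + (β 0 * γ 0 - β 0 ^ 2 * β 1 - β 2 * (β 0 ^ 2 + 2 * β 0 * β 1 - γ 0) + 2 * β 0 * γ 1)
        * mom μ 1
      + (β 2 * (β 0 ^ 2 * β 1 - β 0 * γ 0) - γ 1 * β 0 ^ 2) :=
    integral_eq_comb μ hfin (f := fun x => Polynomial.eval x (P 1) * Polynomial.eval x (P 3))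
      (β 2 * (β 0 ^ 2 * β 1 - β 0 * γ 0) - γ 1 * β 0 ^ 2)
      (β 0 * γ 0 - β 0 ^ 2 * β 1 - β 2 * (β 0 ^ 2 + 2 * β 0 * β 1 - γ 0) + 2 * β 0 * γ 1)
      (β 0 ^ 2 + 2 * β 0 * β 1 - γ 0 + β 2 * (2 * β 0 + β 1) - γ 1)
      (-(2 * β 0 + β 1) - β 2) 1
      (fun x => by show Polynomial.eval x (P 1) * Polynomial.eval x (P 3) = _; rw [e1, e3]; ring)
      (horth 1 3 (by norm_num))
  have hm1 : mom μ 1 = β 0 := by linear_combination -eqA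
  have hm2 : mom μ 2 = β 0 ^ 2 + γ 0 := by
    linear_combination -eqB + (β 0 + β 1) * hm1
  have hm3 : mom μ 3 = β 0 ^ 3 + 2 * β 0 * γ 0 + β 1 * γ 0 := by
    linear_combination -eqC + (2 * β 0 + β 1) * hm2 - (β 0 ^ 2 + 2 * β 0 * β 1 - γ 0) * hm1
  have hm4 : mom μ 4 = β 0 ^ 4 + γ 0 * (3 * β 0 ^ 2 + 2 * β 0 * β 1 + β 1 ^ 2)
      + γ 0 ^ 2 + γ 0 * γ 1 := by
    linear_combination -eqD - (-(2 * β 0 + β 1) - β 2) * hm3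
      - (β 0 ^ 2 + 2 * β 0 * β 1 - γ 0 + β 2 * (2 * β 0 + β 1) - γ 1) * hm2
      - (β 0 * γ 0 - β 0 ^ 2 * β 1 - β 2 * (β 0 ^ 2 + 2 * β 0 * β 1 - γ 0) + 2 * β 0 * γ 1) * hm1
  -- the cumulant relations
  have cm1 := hr 1 (by norm_num)
  have cm2 := hr 2 (by norm_num)
  have cm3 := hr 3 (by norm_num)
  have cm4 := hr 4 (by norm_num)
  rw [sum1] at cm1
  rw [sum2] at cm2
  rw [sum3] at cm3
  rw [sum4] at cm4
  have hr1 : r 1 = β 0 := by linear_combination hm1 - cm1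
  rw [hr1] at cm2 cm3 cm4
  have hr2 : r 2 = γ 0 := by linear_combination hm2 - cm2
  rw [hr2] at cm3 cm4
  have hr3 : r 3 = γ 0 * (β 1 - β 0) := by linear_combination hm3 - cm3
  rw [hr3] at cm4
  linear_combination hm4 - cm4
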